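/- Let γ : [0,1] → ℝ² be an injective Lipschitz curve with image C, let s > 1 and λ ≥ 1, and let μ be a probability measure supported on C. Then the length of the curve satisfies length(γ) ≥ λ^s / E_s(μ) − 2^s, where E_s(μ) := λ^s ∬_{C×C} μ(dx)μ(dy)/max(|x−y|^s,1). -/

import Mathlib

open MeasureTheory

lemma iUnion_Ico_aux (t : ℕ → ℝ) (ht : Monotone t) (n : ℕ) :
    (⋃ i ∈ Finset.range n, Set.Ico (t i) (t (i+1))) = Set.Ico (t 0) (t n) := by
  induction n with
  | zero => simp
  | succ n ih =>
    rw [Finset.range_add_one, Finset.set_biUnion_insert, ih, Set.union_comm,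
      Set.Ico_union_Ico_eq_Ico (ht (Nat.zero_le n)) (ht (Nat.le_succ n))]


/-- For an injective Lipschitz curve `γ : [0,1] → ℝ²` with image `C`, `s > 1`, `λ ≥ 1`,
and a probability measure `μ` supported on `C`, the length of the curve satisfies
`length(γ) ≥ λ^s / E_s(μ) - 2^s`, where
`E_s(μ) = λ^s ∬_{C×C} μ(dx)μ(dy)/max(|x-y|^s,1)`.
The length is the total variation of `γ` on `[0,1]`. -/
theorem length_ge_energy_bound (γ : ℝ → EuclideanSpace ℝ (Fin 2)) (Kγ : NNReal)
    (hlip : LipschitzOnWith Kγ γ (Set.Icc 0 1))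
    (hinj : Set.InjOn γ (Set.Icc 0 1))
    (s lam : ℝ) (hs : 1 < s) (hlam : 1 ≤ lam)
    (μ : Measure (EuclideanSpace ℝ (Fin 2))) [IsProbabilityMeasure μ]
    (hsupp : μ (γ '' Set.Icc 0 1) = 1) :
    lam ^ s / (lam ^ s * ∫ x in γ '' Set.Icc 0 1, ∫ y in γ '' Set.Icc 0 1,
        1 / max (dist x y ^ s) 1 ∂μ ∂μ) - 2 ^ s
      ≤ (eVariationOn γ (Set.Icc 0 1)).toReal := by
  set L : ℝ := (eVariationOn γ (Set.Icc 0 1)).toReal with hLdef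
  have hL0 : 0 ≤ L := ENNReal.toReal_nonneg
  have hfin : eVariationOn γ (Set.Icc 0 1) ≠ ⊤ := by
    have := hlip.locallyBoundedVariationOn 0 1 ⟨le_refl 0, zero_le_one⟩ ⟨zero_le_one, le_refl 1⟩
    simpa [BoundedVariationOn, Set.inter_self] using this
  have hfin' : ∀ a b : ℝ, 0 ≤ a → b ≤ 1 → eVariationOn γ (Set.Icc a b) ≠ ⊤ :=
    fun a b ha hb => ne_top_of_le_ne_top hfin
      (eVariationOn.mono γ (Set.Icc_subset_Icc ha hb))
  -- additivity
  have hadd : ∀ a b c : ℝ, a ≤ b → b ≤ c →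
      eVariationOn γ (Set.Icc a b) + eVariationOn γ (Set.Icc b c)
        = eVariationOn γ (Set.Icc a c) := by
    intro a b c hab hbc
    have := eVariationOn.Icc_add_Icc γ (s := Set.univ) hab hbc (Set.mem_univ b)
    simpa [Set.univ_inter] using this
  set v : ℝ → ℝ := fun u => (eVariationOn γ (Set.Icc 0 u)).toReal with hvdef
  have hv0 : v 0 = 0 := by
    have : eVariationOn γ (Set.Icc (0:ℝ) 0) = 0 :=
      eVariationOn.subsingleton γ (by rw [Set.Icc_self]; exact Set.subsingleton_singleton)
    simp [hvdef, this]
  have hv1 : v 1 = L := rfl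
  have hvadd : ∀ a b : ℝ, 0 ≤ a → a ≤ b → b ≤ 1 →
      v b = v a + (eVariationOn γ (Set.Icc a b)).toReal := by
    intro a b ha hab hb
    have h := hadd 0 a b ha hab
    have := ENNReal.toReal_add (hfin' 0 a (le_refl 0) (hab.trans hb)) (hfin' a b ha hb)
    show (eVariationOn γ (Set.Icc 0 b)).toReal = _
    rw [← h, this]
  have hvmono : ∀ a b : ℝ, 0 ≤ a → a ≤ b → b ≤ 1 → v a ≤ v b := by
    intro a b ha hab hb
    rw [hvadd a b ha hab hb]
    exact le_add_of_nonneg_right ENNReal.toReal_nonneg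
  -- Lipschitz piece bound
  have hpiece : ∀ a b : ℝ, 0 ≤ a → a ≤ b → b ≤ 1 →
      (eVariationOn γ (Set.Icc a b)).toReal ≤ (Kγ : ℝ) * (b - a) := by
    intro a b ha hab hb
    have hmaps : Set.MapsTo id (Set.Icc a b) (Set.Icc 0 1) := fun u hu =>
      ⟨ha.trans hu.1, hu.2.trans hb⟩
    have h1 : eVariationOn (γ ∘ id) (Set.Icc a b) ≤ Kγ * eVariationOn id (Set.Icc a b) :=
      hlip.comp_eVariationOn_le hmaps
    have h2 : eVariationOn (id : ℝ → ℝ) (Set.Icc a b) ≤ ENNReal.ofReal (b - a) := by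
      have := (monotoneOn_id (s := Set.Icc a b)).eVariationOn_le
        (Set.left_mem_Icc.2 hab) (Set.right_mem_Icc.2 hab)
      simpa [Set.inter_self] using this
    have h3 : eVariationOn γ (Set.Icc a b) ≤ Kγ * ENNReal.ofReal (b - a) := by
      refine le_trans ?_ (mul_le_mul_right h2 _)
      simpa [Function.comp] using h1
    have h4 := ENNReal.toReal_mono (by finiteness) h3
    rwa [ENNReal.toReal_mul, ENNReal.coe_toReal, ENNReal.toReal_ofReal (by linarith)] at h4
  have hvcont : ContinuousOn v (Set.Icc 0 1) := by
    have : LipschitzOnWith Kγ v (Set.Icc 0 1) := by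
      apply LipschitzOnWith.of_dist_le_mul
      intro x hx y hy
      wlog hxy : y ≤ x generalizing x y
      · rw [dist_comm, dist_comm x y]; exact this y hy x hx (le_of_not_ge hxy)
      rw [Real.dist_eq, Real.dist_eq, abs_of_nonneg (sub_nonneg.2 (hvmono y x hy.1 hxy hx.2)),
        abs_of_nonneg (sub_nonneg.2 hxy)]
      have := hvadd y x hy.1 hxy hx.2
      have hp := hpiece y x hy.1 hxy hx.2
      linarith
    exact this.continuousOn
  -- partition
  set N : ℕ := Nat.floor L + 1 with hNdef
  have hNpos : 0 < N := Nat.succ_pos _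
  have hLN : L ≤ (N : ℝ) := by
    have := Nat.lt_floor_add_one L
    push_cast [hNdef]
    linarith
  have hNR : (0:ℝ) < N := by positivity
  set c : ℕ → ℝ := fun i => i * L / N with hcdef
  have hc0 : c 0 = 0 := by simp [hcdef]
  have hcN : c N = L := by simp only [hcdef]; exact mul_div_cancel_left₀ L hNR.ne'
  have hcmono : ∀ i j : ℕ, i ≤ j → c i ≤ c j := by
    intro i j hij
    simp only [hcdef]
    gcongr <;> first | exact hL0 | exact hNR.le | exact_mod_cast hij
  have hcmem : ∀ i : ℕ, i ≤ N → c i ∈ Set.Icc 0 L := by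
    intro i hi
    constructor
    · positivity
    · rw [← hcN]; exact hcmono i N hi
  set S : ℕ → Set ℝ := fun i => Set.Icc 0 1 ∩ v ⁻¹' {c i} with hSdef
  have hScompact : ∀ i, IsCompact (S i) :=
    fun i => isCompact_Icc.of_isClosed_subset
      (hvcont.preimage_isClosed_of_isClosed isClosed_Icc (isClosed_singleton))
      Set.inter_subset_left
  have hSne : ∀ i : ℕ, i ≤ N → (S i).Nonempty := by
    intro i hi
    have := intermediate_value_Icc (zero_le_one) hvcont
    have hmem : c i ∈ Set.Icc (v 0) (v 1) := by rw [hv0, hv1]; exact hcmem i hi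
    obtain ⟨u, hu, hvu⟩ := this hmem
    exact ⟨u, hu, hvu⟩
  set t : ℕ → ℝ := fun i => if N ≤ i then 1 else sInf (S i) with htdef
  have htS : ∀ i : ℕ, i < N → t i ∈ S i := by
    intro i hi
    have : t i = sInf (S i) := by simp [htdef, Nat.not_le.2 hi]
    rw [this]
    exact (hScompact i).sInf_mem (hSne i hi.le)
  have htmem : ∀ i : ℕ, t i ∈ Set.Icc (0:ℝ) 1 := by
    intro i
    by_cases h : N ≤ i
    · simp [htdef, h]
    · exact ((htS i (Nat.not_le.1 h)).1)
  have htv : ∀ i : ℕ, i ≤ N → v (t i) = c i := by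
    intro i hi
    rcases lt_or_eq_of_le hi with h | h
    · exact (htS i h).2
    · subst h; simp only [htdef, le_refl, if_pos]; rw [hv1, hcN]
  have ht0 : t 0 = 0 := by
    have h1 : t 0 ≤ 0 := by
      have : (0:ℝ) ∈ S 0 := ⟨⟨le_refl 0, zero_le_one⟩, by simp [hv0, hc0]⟩
      have hb : BddBelow (S 0) := ⟨0, fun u hu => hu.1.1⟩
      simpa [htdef, Nat.not_le.2 hNpos] using csInf_le hb this
    exact le_antisymm h1 (htmem 0).1
  have htN : t N = 1 := by simp [htdef]
  have htmono : Monotone t := by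
    apply monotone_nat_of_le_succ
    intro i
    by_cases hiN : N ≤ i
    · have : N ≤ i + 1 := hiN.trans (Nat.le_succ i)
      simp [htdef, hiN, this]
    · push_neg at hiN
      rcases Nat.lt_or_ge (i+1) N with h1 | h1
      · -- both sInf, use IVT on [0, t (i+1)]
        have ht1mem := htmem (i+1)
        have hcont' : ContinuousOn v (Set.Icc 0 (t (i+1))) :=
          hvcont.mono (Set.Icc_subset_Icc (le_refl 0) ht1mem.2)
        have := intermediate_value_Icc ht1mem.1 hcont'
        have hmem : c i ∈ Set.Icc (v 0) (v (t (i+1))) := by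
          rw [hv0, htv (i+1) h1.le]
          exact ⟨(hcmem i hiN.le).1, hcmono i (i+1) (Nat.le_succ i)⟩
        obtain ⟨u, hu, hvu⟩ := this hmem
        have huS : u ∈ S i := ⟨⟨hu.1, hu.2.trans ht1mem.2⟩, hvu⟩
        have hb : BddBelow (S i) := ⟨0, fun w hw => hw.1.1⟩
        have : t i ≤ u := by
          simpa [htdef, Nat.not_le.2 hiN] using csInf_le hb huS
        exact this.trans hu.2
      · have h2 : t (i+1) = 1 := by simp [htdef, h1]
        rw [h2]
        exact (htmem i).2
  -- variation of each piece
  have hpiecevar : ∀ i : ℕ, i < N → (eVariationOn γ (Set.Icc (t i) (t (i+1)))).toReal ≤ 1 := by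
    intro i hi
    have h1 : v (t (i+1)) = v (t i) + (eVariationOn γ (Set.Icc (t i) (t (i+1)))).toReal :=
      hvadd _ _ (htmem i).1 (htmono (Nat.le_succ i)) (htmem (i+1)).2
    rw [htv i hi.le, htv (i+1) hi] at h1
    have : (eVariationOn γ (Set.Icc (t i) (t (i+1)))).toReal = c (i+1) - c i := by linarith
    have hco : c (i+1) - c i = L / N := by
      simp only [hcdef]
      push_cast
      ring
    rw [this, hco, div_le_one hNR]
    exact hLN
  -- sets
  set C : Set (EuclideanSpace ℝ (Fin 2)) := γ '' Set.Icc 0 1 with hCdef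
  set B : ℕ → Set (EuclideanSpace ℝ (Fin 2)) :=
    fun i => if i = N then {γ 1} else γ '' Set.Ico (t i) (t (i+1)) with hBdef
  set F : Finset ℕ := Finset.range (N+1) with hFdef
  have hIcc_sub : ∀ i : ℕ, Set.Icc (t i) (t (i+1)) ⊆ Set.Icc (0:ℝ) 1 :=
    fun i => Set.Icc_subset_Icc (htmem i).1 (htmem (i+1)).2
  have hIco_sub : ∀ i : ℕ, Set.Ico (t i) (t (i+1)) ⊆ Set.Icc (0:ℝ) 1 :=
    fun i u hu => ⟨(htmem i).1.trans hu.1, hu.2.le.trans (htmem (i+1)).2⟩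
  have hBsubC : ∀ i : ℕ, B i ⊆ C := by
    intro i x hx
    by_cases h : i = N
    · rw [hBdef] at hx; simp only [h, if_pos] at hx
      rw [Set.mem_singleton_iff] at hx
      exact ⟨1, ⟨zero_le_one, le_refl 1⟩, hx.symm⟩
    · rw [hBdef] at hx; simp only [h, if_neg, if_false] at hx
      obtain ⟨u, hu, rfl⟩ := hx
      exact ⟨u, hIco_sub i hu, rfl⟩
  have hdiam : ∀ i : ℕ, ∀ x ∈ B i, ∀ y ∈ B i, dist x y ≤ 1 := by
    intro i x hx y hy
    by_cases h : i = N
    · rw [hBdef] at hx hy; simp only [h, if_pos] at hx hy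
      rw [Set.mem_singleton_iff] at hx hy
      rw [hx, hy, dist_self]
      exact zero_le_one
    · rw [hBdef] at hx hy; simp only [h, if_neg, if_false] at hx hy
      obtain ⟨a, ha, rfl⟩ := hx
      obtain ⟨b, hb, rfl⟩ := hy
      rcases Nat.lt_or_ge i N with hiN | hiN
      · have hedist := eVariationOn.edist_le γ
          (Set.mem_Icc_of_Ico ha) (Set.mem_Icc_of_Ico hb)
        have hfin2 : eVariationOn γ (Set.Icc (t i) (t (i+1))) ≠ ⊤ :=
          hfin' _ _ (htmem i).1 (htmem (i+1)).2
        have := ENNReal.toReal_mono hfin2 hedist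
        rw [← dist_edist] at this
        exact this.trans (hpiecevar i hiN)
      · exfalso
        have h1 : t i = 1 := by
          rcases Nat.lt_or_ge i N with h2 | h2
          · omega
          · simp [htdef, h2]
        have := ha.2.trans_le (htmem (i+1)).2
        rw [h1] at ha
        exact absurd (ha.1.trans_lt this) (lt_irrefl 1)
  have hBmeas : ∀ i : ℕ, MeasurableSet (B i) := by
    intro i
    by_cases h : i = N
    · rw [hBdef]; simp only [h, if_pos]; exact measurableSet_singleton _
    · rw [hBdef]; simp only [h, if_neg, if_false]
      rcases eq_or_lt_of_le (htmono (Nat.le_succ i)) with heq | hlt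
      · rw [← heq, Set.Ico_self, Set.image_empty]; exact MeasurableSet.empty
      · have himg : γ '' Set.Ico (t i) (t (i+1))
            = γ '' Set.Icc (t i) (t (i+1)) \ {γ (t (i+1))} := by
          ext x
          constructor
          · rintro ⟨u, hu, rfl⟩
            refine ⟨⟨u, ⟨hu.1, hu.2.le⟩, rfl⟩, ?_⟩
            intro hx
            rw [Set.mem_singleton_iff] at hx
            have : u = t (i+1) :=
              hinj (hIco_sub i hu) (htmem (i+1)) hx
            exact absurd this (ne_of_lt hu.2)
          · rintro ⟨⟨u, hu, rfl⟩, hne⟩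
            refine ⟨u, ⟨hu.1, lt_of_le_of_ne hu.2 ?_⟩, rfl⟩
            intro heq2
            exact hne (by rw [heq2]; exact rfl)
        rw [himg]
        have hcomp : IsCompact (γ '' Set.Icc (t i) (t (i+1))) :=
          isCompact_Icc.image_of_continuousOn (hlip.continuousOn.mono (hIcc_sub i))
        exact hcomp.measurableSet.diff (measurableSet_singleton _)
  have hdisj : (↑F : Set ℕ).Pairwise (Function.onFun Disjoint B) := by
    have key : ∀ i j : ℕ, i < j → j ≤ N → Disjoint (B i) (B j) := by
      intro i j hij hjN
      rw [Set.disjoint_left]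
      intro x hxi hxj
      have hiN : i < N := lt_of_lt_of_le hij hjN
      have hiNe : i ≠ N := hiN.ne
      rw [hBdef] at hxi; simp only [hiNe, if_neg, if_false] at hxi
      obtain ⟨u, hu, rfl⟩ := hxi
      have hu1 : u ∈ Set.Icc (0:ℝ) 1 := hIco_sub i hu
      by_cases hj : j = N
      · rw [hBdef] at hxj; simp only [hj, if_pos] at hxj
        rw [Set.mem_singleton_iff] at hxj
        have hu2 : u = 1 := hinj hu1 ⟨zero_le_one, le_refl 1⟩ hxj
        have : u < 1 := hu.2.trans_le (htmem (i+1)).2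
        rw [hu2] at this
        exact absurd this (lt_irrefl 1)
      · rw [hBdef] at hxj; simp only [hj, if_neg, if_false] at hxj
        obtain ⟨w, hw, hwx⟩ := hxj
        have hw1 : w ∈ Set.Icc (0:ℝ) 1 := hIco_sub j hw
        have huw : u = w := hinj hu1 hw1 hwx.symm
        have : u < w := hu.2.trans_le ((htmono hij).trans hw.1)
        rw [huw] at this
        exact absurd this (lt_irrefl w)
    intro i hi j hj hne
    rw [Finset.mem_coe, hFdef, Finset.mem_range, Nat.lt_succ_iff] at hi hj
    rcases lt_or_gt_of_ne hne with h | h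
    · exact key i j h hj
    · exact (key j i h hi).symm
  have hcover : C ⊆ ⋃ i ∈ F, B i := by
    rintro x ⟨u, hu, rfl⟩
    by_cases h1 : u = 1
    · subst h1
      refine Set.mem_biUnion (show N ∈ F by simp [hFdef]) ?_
      rw [hBdef]; simp
    · have hu' : u ∈ Set.Ico (t 0) (t N) := by
        rw [ht0, htN]
        exact ⟨hu.1, lt_of_le_of_ne hu.2 h1⟩
      rw [← iUnion_Ico_aux t htmono N] at hu'
      simp only [Set.mem_iUnion, Finset.mem_range] at hu'
      obtain ⟨i, hiN, hui⟩ := hu'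
      refine Set.mem_biUnion (show i ∈ F by simp [hFdef]; omega) ?_
      rw [hBdef]; simp only [hiN.ne, if_neg, if_false]
      exact ⟨u, hui, rfl⟩
  -- measures
  have hμC : μ C = 1 := hsupp
  have hμB : ∀ i : ℕ, μ (B i) ≠ ⊤ := fun i => (measure_lt_top μ _).ne
  have hsum1 : (1:ℝ) ≤ ∑ i ∈ F, (μ (B i)).toReal := by
    have h2 : μ C ≤ ∑ i ∈ F, μ (B i) :=
      le_trans (measure_mono hcover) (measure_biUnion_finset_le F B)
    have h3 : (∑ i ∈ F, μ (B i)) ≠ ⊤ := by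
      refine (ENNReal.sum_lt_top.2 fun i _ => ?_).ne
      exact (measure_lt_top μ _)
    calc (1:ℝ) = (μ C).toReal := by rw [hμC]; simp
    _ ≤ (∑ i ∈ F, μ (B i)).toReal := ENNReal.toReal_mono h3 h2
    _ = ∑ i ∈ F, (μ (B i)).toReal := ENNReal.toReal_sum (fun i _ => hμB i)
  -- integrand
  have hs0 : (0:ℝ) ≤ s := by linarith
  set f : EuclideanSpace ℝ (Fin 2) → EuclideanSpace ℝ (Fin 2) → ℝ :=
    fun x y => 1 / max (dist x y ^ s) 1 with hfdef
  have hfpos : ∀ x y : EuclideanSpace ℝ (Fin 2), 0 < max (dist x y ^ s) 1 :=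
    fun x y => lt_of_lt_of_le zero_lt_one (le_max_right _ _)
  have hf0 : ∀ x y, 0 ≤ f x y := fun x y => le_of_lt (by
    rw [hfdef]; exact div_pos zero_lt_one (hfpos x y))
  have hf1 : ∀ x y, f x y ≤ 1 := by
    intro x y
    rw [hfdef, div_le_one (hfpos x y)]
    exact le_max_right _ _
  have hfcont : Continuous
      (fun p : EuclideanSpace ℝ (Fin 2) × EuclideanSpace ℝ (Fin 2) => f p.1 p.2) := by
    have hden : Continuous (fun p : EuclideanSpace ℝ (Fin 2) × EuclideanSpace ℝ (Fin 2) =>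
        max (dist p.1 p.2 ^ s) 1) :=
      ((continuous_fst.dist continuous_snd).rpow_const (fun p => Or.inr hs0)).max
        continuous_const
    exact continuous_const.div hden (fun p => (hfpos p.1 p.2).ne')
  have hfint : ∀ x : EuclideanSpace ℝ (Fin 2), ∀ D : Set (EuclideanSpace ℝ (Fin 2)),
      IntegrableOn (fun y => f x y) D μ := by
    intro x D
    apply Integrable.mono' (integrable_const (1:ℝ))
    · exact ((hfcont.comp (continuous_const.prodMk continuous_id)).aestronglyMeasurable)
    · refine Filter.Eventually.of_forall fun y => ?_
      rw [Real.norm_eq_abs, abs_of_nonneg (hf0 x y)]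
      exact hf1 x y
  set g : EuclideanSpace ℝ (Fin 2) → ℝ := fun x => ∫ y in C, f x y ∂μ with hgdef
  have hg0 : ∀ x, 0 ≤ g x := fun x => integral_nonneg (fun y => hf0 x y)
  have hgsm : StronglyMeasurable g :=
    (hfcont.stronglyMeasurable).integral_prod_right' (ν := μ.restrict C)
  have hgbd : ∀ x, ‖g x‖ ≤ 1 := by
    intro x
    have := norm_integral_le_of_norm_le_const (μ := μ.restrict C)
      (f := fun y => f x y) (C := 1)
      (Filter.Eventually.of_forall fun y => by
        rw [Real.norm_eq_abs, abs_of_nonneg (hf0 x y)]; exact hf1 x y)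
    refine this.trans ?_
    rw [Measure.real, Measure.restrict_apply_univ, hμC]
    simp
  have hgint : IntegrableOn g C μ :=
    Integrable.mono' (integrable_const (1:ℝ)) hgsm.aestronglyMeasurable
      (Filter.Eventually.of_forall hgbd)
  -- step 1 : inner bound
  have hstep1 : ∀ i ∈ F, (μ (B i)).toReal ^ 2 ≤ ∫ x in B i, g x ∂μ := by
    intro i _
    have h1 : ∀ x ∈ B i, (μ (B i)).toReal ≤ g x := by
      intro x hx
      have e1 : ∫ y in B i, f x y ∂μ = (μ (B i)).toReal := by
        rw [setIntegral_congr_fun (hBmeas i) (g := fun _ => (1:ℝ)) ?heq, setIntegral_const]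
        · simp [Measure.real]
        case heq =>
          intro y hy
          have hd : dist x y ≤ 1 := hdiam i x hx y hy
          have hds : dist x y ^ s ≤ 1 := Real.rpow_le_one dist_nonneg hd hs0
          simp only [hfdef]
          rw [max_eq_right hds]
          norm_num
      calc (μ (B i)).toReal = ∫ y in B i, f x y ∂μ := e1.symm
      _ ≤ ∫ y in C, f x y ∂μ := by
        apply setIntegral_mono_set (hfint x C)
          (Filter.Eventually.of_forall fun y => hf0 x y)
        exact Filter.Eventually.of_forall fun y hy => hBsubC i hy
    calc (μ (B i)).toReal ^ 2 = ∫ _ in B i, (μ (B i)).toReal ∂μ := by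
          rw [setIntegral_const]; simp [sq, Measure.real]
    _ ≤ ∫ x in B i, g x ∂μ := by
        apply setIntegral_mono_on
          (integrableOn_const (measure_lt_top μ _).ne)
          (hgint.mono_set (hBsubC i)) (hBmeas i) h1
  -- step 2 : sum over pieces
  have hstep2 : ∑ i ∈ F, (μ (B i)).toReal ^ 2 ≤ ∫ x in C, g x ∂μ := by
    calc ∑ i ∈ F, (μ (B i)).toReal ^ 2 ≤ ∑ i ∈ F, ∫ x in B i, g x ∂μ :=
          Finset.sum_le_sum hstep1
    _ = ∫ x in ⋃ i ∈ F, B i, g x ∂μ :=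
          (integral_biUnion_finset F (fun i _ => hBmeas i) hdisj
            (fun i _ => hgint.mono_set (hBsubC i))).symm
    _ ≤ ∫ x in C, g x ∂μ := by
          apply setIntegral_mono_set hgint
            (Filter.Eventually.of_forall fun x => hg0 x)
          have hsub : (⋃ i ∈ F, B i) ⊆ C := Set.iUnion₂_subset fun i _ => hBsubC i
          exact Filter.Eventually.of_forall fun x hx => hsub hx
  -- Cauchy-Schwarz
  have hCS : (1:ℝ) ≤ ((N:ℝ) + 1) * ∑ i ∈ F, (μ (B i)).toReal ^ 2 := by
    have h1 := sq_sum_le_card_mul_sum_sq (s := F) (f := fun i => (μ (B i)).toReal)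
    have hcard : (F.card : ℝ) = (N:ℝ) + 1 := by simp [hFdef]
    have h2 : (1:ℝ) ≤ (∑ i ∈ F, (μ (B i)).toReal) ^ 2 := by nlinarith [hsum1]
    calc (1:ℝ) ≤ (∑ i ∈ F, (μ (B i)).toReal) ^ 2 := h2
    _ ≤ (F.card : ℝ) * ∑ i ∈ F, (μ (B i)).toReal ^ 2 := h1
    _ = ((N:ℝ) + 1) * ∑ i ∈ F, (μ (B i)).toReal ^ 2 := by rw [hcard]
  -- conclusion
  set I : ℝ := ∫ x in C, g x ∂μ with hIdef
  have hNR1 : (0:ℝ) < (N:ℝ) + 1 := by positivity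
  have hIlb : 1 / ((N:ℝ) + 1) ≤ I := by
    rw [div_le_iff₀ hNR1]
    calc (1:ℝ) ≤ ((N:ℝ)+1) * ∑ i ∈ F, (μ (B i)).toReal ^ 2 := hCS
    _ ≤ ((N:ℝ)+1) * I := by
        apply mul_le_mul_of_nonneg_left hstep2 hNR1.le
    _ = I * ((N:ℝ)+1) := by ring
  have hIpos : 0 < I := lt_of_lt_of_le (by positivity) hIlb
  have h1I : 1 / I ≤ (N:ℝ) + 1 := by
    rw [div_le_iff₀ hIpos]
    rw [div_le_iff₀ hNR1] at hIlb
    linarith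
  have hlampos : (0:ℝ) < lam ^ s := Real.rpow_pos_of_pos (by linarith) s
  have h2s : (2:ℝ) ≤ 2 ^ s := by
    calc (2:ℝ) = 2 ^ (1:ℝ) := (Real.rpow_one 2).symm
    _ ≤ 2 ^ s := Real.rpow_le_rpow_of_exponent_le one_le_two hs.le
  have hNL2 : (N:ℝ) + 1 ≤ L + 2 ^ s := by
    have hfl : (⌊L⌋₊ : ℝ) ≤ L := Nat.floor_le hL0
    have : (N:ℝ) = (⌊L⌋₊ : ℝ) + 1 := by rw [hNdef]; push_cast; ring
    linarith
  have hgoal : lam ^ s / (lam ^ s * I) - 2 ^ s ≤ L := by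
    rw [div_mul_eq_div_div, div_self hlampos.ne']
    linarith
  exact hgoal
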